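/- The function f satisfies: f(0) = 0, f is strictly increasing (in particular nondecreasing), f(r) > 0 for every r > 0, and f is concave on [0,∞). -/

import Mathlib

open Filter Set

/-- The function `f` satisfies `f(0) = 0`, is strictly increasing on `[0,∞)`, is positive
on `(0,∞)`, and is concave on `[0,∞)`. -/
theorem f_properties
    (σ₀ : ℝ) (hσ₀ : 0 < σ₀)
    (κ : ℝ → ℝ) (hκc : ContinuousOn κ (Set.Ici 0))
    (hκ : ∃ c > 0, ∀ᶠ r in Filter.atTop, c ≤ κ r)
    (R₀ : ℝ) (hR₀ : R₀ = sInf {s : ℝ | 0 ≤ s ∧ ∀ r ≥ s, 0 ≤ κ r})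
    (R₁ : ℝ) (hR₁ : R₁ = sInf {s : ℝ | R₀ ≤ s ∧ ∀ r ≥ s, 4 * σ₀ ^ 2 ≤ s * (s - R₀) * κ r})
    (φ : ℝ → ℝ)
    (hφ : ∀ r, φ r = Real.exp (-(1 / (2 * σ₀ ^ 2)) * ∫ s in (0:ℝ)..r, s * max 0 (-κ s)))
    (Φ : ℝ → ℝ) (hΦ : ∀ r, Φ r = ∫ s in (0:ℝ)..r, φ s)
    (l : ℝ) (hl : l = (∫ s in (0:ℝ)..R₁, Φ s / φ s)⁻¹)
    (g : ℝ → ℝ) (hg : ∀ r, g r = 1 - l / 2 * ∫ s in (0:ℝ)..(min r R₁), Φ s / φ s)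
    (f : ℝ → ℝ) (hf : ∀ r, f r = ∫ s in (0:ℝ)..r, φ s * g s) :
    f 0 = 0 ∧
    StrictMonoOn f (Set.Ici 0) ∧
    (∀ r > (0:ℝ), 0 < f r) ∧
    ConcaveOn ℝ (Set.Ici 0) f := by
  -- extended (globally continuous) versions of all the auxiliary functions
  set κ' : ℝ → ℝ := fun s => κ (max s 0) with hκ'def
  have hκ'c : Continuous κ' :=
    hκc.comp_continuous (continuous_id.max continuous_const) fun x => Set.mem_Ici.2 (le_max_right _ _)
  set h : ℝ → ℝ := fun s => s * max 0 (-κ' s) with hhdef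
  have hhc : Continuous h := continuous_id.mul (continuous_const.max hκ'c.neg)
  have hhint : ∀ a b : ℝ, IntervalIntegrable h MeasureTheory.volume a b := fun a b =>
    hhc.intervalIntegrable a b
  have hheq : ∀ s : ℝ, 0 ≤ s → s * max 0 (-κ s) = h s := by
    intro s hs; simp [hhdef, hκ'def, max_eq_left hs]
  have hhnn : ∀ s : ℝ, 0 ≤ s → 0 ≤ h s := fun s hs => mul_nonneg hs (le_max_left _ _)
  set c : ℝ := 1 / (2 * σ₀ ^ 2) with hc
  have hcpos : 0 < c := by positivity
  set φ' : ℝ → ℝ := fun r => Real.exp (-c * ∫ s in (0:ℝ)..r, h s) with hφ'def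
  have hφ'c : Continuous φ' :=
    Real.continuous_exp.comp (continuous_const.mul (intervalIntegral.continuous_primitive hhint 0))
  have hφ'int : ∀ a b : ℝ, IntervalIntegrable φ' MeasureTheory.volume a b := fun a b =>
    hφ'c.intervalIntegrable a b
  have hφ'pos : ∀ r, 0 < φ' r := fun r => Real.exp_pos _
  have hφφ' : ∀ r : ℝ, 0 ≤ r → φ r = φ' r := by
    intro r hr
    rw [hφ r, hφ'def]
    have : (∫ s in (0:ℝ)..r, s * max 0 (-κ s)) = ∫ s in (0:ℝ)..r, h s := by
      apply intervalIntegral.integral_congr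
      intro s hs
      rw [uIcc_of_le hr] at hs
      exact hheq s hs.1
    rw [this, hc]
  have hφ'anti : AntitoneOn φ' (Ici 0) := by
    intro a ha b hb hab
    apply Real.exp_le_exp.2
    have hI : (∫ s in (0:ℝ)..a, h s) ≤ ∫ s in (0:ℝ)..b, h s := by
      rw [← intervalIntegral.integral_add_adjacent_intervals (hhint 0 a) (hhint a b)]
      have : 0 ≤ ∫ s in a..b, h s :=
        intervalIntegral.integral_nonneg hab fun u hu => hhnn u (le_trans ha hu.1)
      linarith
    nlinarith [hI, hcpos]
  set Φ' : ℝ → ℝ := fun r => ∫ s in (0:ℝ)..r, φ' s with hΦ'def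
  have hΦ'c : Continuous Φ' := intervalIntegral.continuous_primitive hφ'int 0
  have hΦΦ' : ∀ r : ℝ, 0 ≤ r → Φ r = Φ' r := by
    intro r hr
    rw [hΦ r, hΦ'def]
    apply intervalIntegral.integral_congr
    intro s hs
    rw [uIcc_of_le hr] at hs
    exact hφφ' s hs.1
  have hΦ'nn : ∀ r : ℝ, 0 ≤ r → 0 ≤ Φ' r := fun r hr =>
    intervalIntegral.integral_nonneg hr fun u _ => (hφ'pos u).le
  set q : ℝ → ℝ := fun s => Φ' s / φ' s with hqdef
  have hqc : Continuous q := hΦ'c.div hφ'c fun x => (hφ'pos x).ne'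
  have hqint : ∀ a b : ℝ, IntervalIntegrable q MeasureTheory.volume a b := fun a b =>
    hqc.intervalIntegrable a b
  have hqnn : ∀ s : ℝ, 0 ≤ s → 0 ≤ q s := fun s hs =>
    div_nonneg (hΦ'nn s hs) (hφ'pos s).le
  set I : ℝ → ℝ := fun t => ∫ s in (0:ℝ)..t, q s with hIdef
  have hIc : Continuous I := intervalIntegral.continuous_primitive hqint 0
  have hImono : ∀ a b : ℝ, 0 ≤ a → a ≤ b → I a ≤ I b := by
    intro a b ha hab
    rw [hIdef]
    simp only
    rw [← intervalIntegral.integral_add_adjacent_intervals (hqint 0 a) (hqint a b)]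
    have : 0 ≤ ∫ s in a..b, q s :=
      intervalIntegral.integral_nonneg hab fun u hu => hqnn u (le_trans ha hu.1)
    linarith
  have hInn : ∀ t : ℝ, 0 ≤ t → 0 ≤ I t := fun t ht =>
    intervalIntegral.integral_nonneg ht fun u hu => hqnn u hu.1
  -- R₀ and R₁ are nonnegative
  have hR₀nn : 0 ≤ R₀ := by
    rw [hR₀]; exact Real.sInf_nonneg fun x hx => hx.1
  have hR₁nn : 0 ≤ R₁ := by
    rw [hR₁]; exact Real.sInf_nonneg fun x hx => le_trans hR₀nn hx.1
  -- rewrite l and g in terms of I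
  have hqeq : ∀ t : ℝ, 0 ≤ t → (∫ s in (0:ℝ)..t, Φ s / φ s) = I t := by
    intro t ht
    rw [hIdef]
    apply intervalIntegral.integral_congr
    intro s hs
    rw [uIcc_of_le ht] at hs
    show Φ s / φ s = q s
    rw [hΦΦ' s hs.1, hφφ' s hs.1]
  have hl' : l = (I R₁)⁻¹ := by rw [hl, hqeq R₁ hR₁nn]
  have hlnn : 0 ≤ l := by rw [hl']; exact inv_nonneg.2 (hInn R₁ hR₁nn)
  have hg' : ∀ r : ℝ, 0 ≤ r → g r = 1 - l / 2 * I (min r R₁) := by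
    intro r hr
    rw [hg r, hqeq (min r R₁) (le_min hr hR₁nn)]
  -- the key bounds on g
  have hkey : ∀ r : ℝ, 0 ≤ r → 0 ≤ l * I (min r R₁) ∧ l * I (min r R₁) ≤ 1 := by
    intro r hr
    have htnn : 0 ≤ min r R₁ := le_min hr hR₁nn
    have h1 : I (min r R₁) ≤ I R₁ := hImono _ _ htnn (min_le_right _ _)
    have h2 : 0 ≤ I (min r R₁) := hInn _ htnn
    constructor
    · exact mul_nonneg hlnn h2
    · rcases eq_or_lt_of_le (hInn R₁ hR₁nn) with hIR | hIR
      · have : I (min r R₁) = 0 := le_antisymm (hIR ▸ h1) h2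
        simp [this]
      · have hlI : l * I R₁ = 1 := by
          rw [hl']; field_simp
        calc l * I (min r R₁) ≤ l * I R₁ := mul_le_mul_of_nonneg_left h1 hlnn
          _ = 1 := hlI
  set g' : ℝ → ℝ := fun r => 1 - l / 2 * I (min r R₁) with hg'def
  have hg'c : Continuous g' :=
    continuous_const.sub (continuous_const.mul (hIc.comp (continuous_id.min continuous_const)))
  have hgg' : ∀ r : ℝ, 0 ≤ r → g r = g' r := fun r hr => hg' r hr
  have hg'lb : ∀ r : ℝ, 0 ≤ r → 1 / 2 ≤ g' r := by
    intro r hr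
    obtain ⟨h1, h2⟩ := hkey r hr
    rw [hg'def]
    simp only
    linarith
  have hg'anti : AntitoneOn g' (Ici 0) := by
    intro a ha b hb hab
    have : I (min a R₁) ≤ I (min b R₁) :=
      hImono _ _ (le_min ha hR₁nn) (min_le_min_right _ hab)
    have := mul_le_mul_of_nonneg_left this (by linarith : (0:ℝ) ≤ l / 2)
    simp only [hg'def]
    linarith
  -- the integrand of f
  set ψ : ℝ → ℝ := fun s => φ' s * g' s with hψdef
  have hψc : Continuous ψ := hφ'c.mul hg'c
  have hψint : ∀ a b : ℝ, IntervalIntegrable ψ MeasureTheory.volume a b := fun a b =>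
    hψc.intervalIntegrable a b
  have hψpos : ∀ s : ℝ, 0 ≤ s → 0 < ψ s := fun s hs =>
    mul_pos (hφ'pos s) (lt_of_lt_of_le (by norm_num) (hg'lb s hs))
  have hψanti : AntitoneOn ψ (Ici 0) := by
    intro a ha b hb hab
    have hgb : 0 ≤ g' b := le_trans (by norm_num) (hg'lb b hb)
    calc φ' b * g' b ≤ φ' a * g' b :=
          mul_le_mul_of_nonneg_right (hφ'anti ha hb hab) hgb
      _ ≤ φ' a * g' a := mul_le_mul_of_nonneg_left (hg'anti ha hb hab) (hφ'pos a).le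
  set F : ℝ → ℝ := fun r => ∫ s in (0:ℝ)..r, ψ s with hFdef
  have hfF : ∀ r : ℝ, 0 ≤ r → f r = F r := by
    intro r hr
    rw [hf r, hFdef]
    apply intervalIntegral.integral_congr
    intro s hs
    rw [uIcc_of_le hr] at hs
    show φ s * g s = ψ s
    rw [hφφ' s hs.1, hgg' s hs.1]
  have hFd : ∀ x : ℝ, HasDerivAt F (ψ x) x := fun x =>
    (hψc.integral_hasStrictDerivAt 0 x).hasDerivAt
  -- strict monotonicity
  have hmono : StrictMonoOn f (Set.Ici 0) := by
    intro a ha b hb hab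
    rw [hfF a ha, hfF b hb]
    have hsplit : F a + (∫ s in a..b, ψ s) = F b :=
      intervalIntegral.integral_add_adjacent_intervals (hψint 0 a) (hψint a b)
    have hpos : 0 < ∫ s in a..b, ψ s :=
      intervalIntegral.intervalIntegral_pos_of_pos_on (hψint a b)
        (fun x hx => hψpos x (le_trans ha hx.1.le)) hab
    linarith
  have hf0 : f 0 = 0 := by rw [hf 0, intervalIntegral.integral_same]
  refine ⟨hf0, hmono, ?_, ?_⟩
  · intro r hr
    have := hmono (Set.mem_Ici.2 (le_refl 0)) (Set.mem_Ici.2 hr.le) hr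
    rwa [hf0] at this
  · -- concavity
    have hFconc : ConcaveOn ℝ (Ici 0) F := by
      apply AntitoneOn.concaveOn_of_deriv (convex_Ici 0)
      · exact (intervalIntegral.continuous_primitive hψint 0).continuousOn
      · exact fun x _ => (hFd x).differentiableAt.differentiableWithinAt
      · rw [interior_Ici]
        intro a ha b hb hab
        rw [(hFd a).deriv, (hFd b).deriv]
        exact hψanti (Set.mem_Ici.2 (Set.mem_Ioi.1 ha).le) (Set.mem_Ici.2 (Set.mem_Ioi.1 hb).le) hab
    refine ⟨convex_Ici 0, fun x hx y hy a b ha hb hab => ?_⟩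
    have hxy : a • x + b • y ∈ Ici 0 := (convex_Ici 0) hx hy ha hb hab
    rw [hfF x hx, hfF y hy, hfF _ hxy]
    exact hFconc.2 hx hy ha hb hab
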